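/- Let m be a natural number, let n and c be positive integers, and let b be an integer. Then β_m(nc, bc) = c^{1-m} · β_m(n, b), i.e. c^{m-1} · β_m(nc, bc) = β_m(n, b) when m ≥ 1, and β_0(nc, bc) = c · β_0(n, b). -/

import Mathlib

/-- `ζ_n = exp(2πi/n)`, the standard primitive `n`-th root of unity. -/
noncomputable def zeta (n : ℕ) : ℂ := Complex.exp (2 * (Real.pi : ℂ) * Complex.I / (n : ℂ))

/-- `β_{m_1,…,m_k}(n,b) = ∑_{a=0}^{n-1} ζ_n^{ab} ∏_j B_{m_j}(a/n)`, where
`B_m` is the `m`-th Bernoulli polynomial. -/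
noncomputable def betaB (M : List ℕ) (n : ℕ) (b : ℤ) : ℂ :=
  ∑ a ∈ Finset.range n, zeta n ^ ((a : ℤ) * b) *
    (M.map fun m => (((Polynomial.bernoulli m).eval ((a : ℚ) / (n : ℚ)) : ℚ) : ℂ)).prod

open Polynomial Finset

/-- The "Raabe defect" polynomial. -/
noncomputable def raabeP (c m : ℕ) : Polynomial ℚ :=
  (∑ s ∈ range c, (Polynomial.bernoulli m).comp (C (1/(c:ℚ)) * (X + C (s:ℚ)))) -
    C ((c:ℚ) ^ ((1:ℤ) - (m:ℤ))) * Polynomial.bernoulli m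

lemma raabeP_eval (c m : ℕ) (hc : 0 < c) (x : ℚ) :
    (raabeP c m).eval x = (∑ s ∈ range c, (Polynomial.bernoulli m).eval ((x + s)/c)) -
      (c:ℚ) ^ ((1:ℤ) - (m:ℤ)) * (Polynomial.bernoulli m).eval x := by
  have hc0 : (c:ℚ) ≠ 0 := by positivity
  simp only [raabeP, eval_sub, eval_finset_sum, eval_comp, eval_mul, eval_C, eval_add, eval_X]
  congr 1
  refine Finset.sum_congr rfl fun s _ => ?_
  rw [one_div, inv_mul_eq_div]

lemma raabeP_periodic (c m : ℕ) (hc : 0 < c) (x : ℚ) :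
    (raabeP c m).eval (x + c) = (raabeP c m).eval x := by
  have hc0 : (c:ℚ) ≠ 0 := by positivity
  rw [raabeP_eval c m hc, raabeP_eval c m hc]
  have h1 : ∀ s : ℕ, (x + c + s)/c = 1 + (x + s)/c := by
    intro s; field_simp; ring
  have h2 : (Polynomial.bernoulli m).eval (x + c)
      = (Polynomial.bernoulli m).eval x + ∑ j ∈ range c, (m:ℚ) * (x + j) ^ (m - 1) := by
    have := Finset.sum_range_sub (fun j : ℕ => (Polynomial.bernoulli m).eval (x + j)) c
    have h3 : ∀ j : ℕ, (Polynomial.bernoulli m).eval (x + (j+1:ℕ))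
        - (Polynomial.bernoulli m).eval (x + j) = (m:ℚ) * (x + j) ^ (m - 1) := by
      intro j
      have : x + ((j:ℕ)+1:ℕ) = 1 + (x + j) := by push_cast; ring
      rw [this, Polynomial.bernoulli_eval_one_add]
      ring
    simp only [h3, Nat.cast_zero, add_zero] at this
    linarith [this]
  simp only [h1, Polynomial.bernoulli_eval_one_add, h2]
  rw [Finset.sum_add_distrib, mul_add]
  have h4 : ∑ s ∈ range c, (m:ℚ) * ((x + s)/c) ^ (m - 1)
      = (c:ℚ) ^ ((1:ℤ) - (m:ℤ)) * ∑ j ∈ range c, (m:ℚ) * (x + j) ^ (m - 1) := by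
    rcases m with _ | k
    · simp
    · rw [Finset.mul_sum]
      refine Finset.sum_congr rfl fun s _ => ?_
      have he : (1:ℤ) - ((k+1:ℕ):ℤ) = -(k:ℤ) := by push_cast; ring
      rw [he, zpow_neg, zpow_natCast, div_pow]
      field_simp
      simp only [Nat.add_sub_cancel]
  rw [h4]; ring

lemma const_of_periodic (p : Polynomial ℚ) (c : ℕ) (hc : 0 < c)
    (h : ∀ x : ℚ, p.eval (x + c) = p.eval x) : p = C (p.eval 0) := by
  have key : ∀ k : ℕ, p.eval ((k:ℚ) * (c:ℚ)) = p.eval 0 := by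
    intro k
    induction k with
    | zero => simp
    | succ k ih =>
      have : ((k:ℚ)+1) * c = (k:ℚ) * c + c := by ring
      rw [Nat.cast_succ, this, h, ih]
  by_contra hne
  have hq : p - C (p.eval 0) ≠ 0 := sub_ne_zero.mpr hne
  apply hq
  apply Polynomial.eq_zero_of_infinite_isRoot
  apply Set.infinite_of_injective_forall_mem
    (f := fun k : ℕ => ((k : ℚ) * c))
  case hi =>
    intro a b hab
    have hc0 : (c:ℚ) ≠ 0 := by positivity
    have := mul_right_cancel₀ hc0 hab
    exact_mod_cast this
  case _ =>
    intro k
    simp only [Set.mem_setOf_eq, IsRoot, eval_sub, eval_C, key k, sub_self]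

lemma raabeP_derivative (c m : ℕ) (hc : 0 < c) :
    derivative (raabeP c (m+1)) = C (((m:ℚ)+1)/c) * raabeP c m := by
  have hc0 : (c:ℚ) ≠ 0 := by positivity
  have hC : (C (((m:ℚ)+1)/c) : Polynomial ℚ) = ((m : Polynomial ℚ) + 1) * C (1/(c:ℚ)) := by
    rw [div_eq_mul_one_div, C_mul, C_add, C_1, map_natCast C m]
  have he : (c:ℚ) ^ ((1:ℤ) - ((m+1:ℕ):ℤ)) = (1/(c:ℚ)) * (c:ℚ) ^ ((1:ℤ) - (m:ℤ)) := by
    have : (1:ℤ) - ((m+1:ℕ):ℤ) = ((1:ℤ) - (m:ℤ)) - 1 := by push_cast; ring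
    rw [this, zpow_sub_one₀ hc0]
    field_simp
  simp only [raabeP, derivative_sub, derivative_sum, derivative_comp, derivative_C_mul,
    derivative_add, derivative_X, derivative_C, add_zero, mul_one,
    Polynomial.derivative_bernoulli_add_one, mul_sub, Finset.mul_sum]
  congr 1
  · refine Finset.sum_congr rfl fun s _ => ?_
    simp only [Polynomial.mul_comp, Polynomial.natCast_comp, Polynomial.add_comp,
      Polynomial.one_comp, hC]
    ring
  · rw [he, hC, C_mul]
    ring

lemma raabeP_eq_zero (c m : ℕ) (hc : 0 < c) : raabeP c m = 0 := by
  have hconst := const_of_periodic (raabeP c (m+1)) c hc (raabeP_periodic c (m+1) hc)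
  have hd : derivative (raabeP c (m+1)) = 0 := by rw [hconst, derivative_C]
  rw [raabeP_derivative c m hc] at hd
  rcases mul_eq_zero.mp hd with h | h
  · exfalso
    have hc0 : (c:ℚ) ≠ 0 := by positivity
    have : ((m:ℚ)+1)/c ≠ 0 := by positivity
    exact this (by simpa using h)
  · exact h

/-- Raabe's multiplication theorem for Bernoulli polynomials. -/
lemma raabe (m c : ℕ) (hc : 0 < c) (x : ℚ) :
    ∑ s ∈ range c, (Polynomial.bernoulli m).eval ((x + s)/c)
      = (c:ℚ) ^ ((1:ℤ) - (m:ℤ)) * (Polynomial.bernoulli m).eval x := by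
  have h := raabeP_eq_zero c m hc
  have := raabeP_eval c m hc x
  rw [h, eval_zero] at this
  linarith [this]

lemma sum_range_mul_eq {β : Type*} [AddCommMonoid β] (f : ℕ → β) (n c : ℕ) (hn : 0 < n) :
    ∑ a ∈ Finset.range (n * c), f a
      = ∑ s ∈ Finset.range c, ∑ r ∈ Finset.range n, f (r + n * s) := by
  rw [← Finset.sum_product']
  refine Finset.sum_nbij' (fun a => (a / n, a % n)) (fun p => p.2 + n * p.1) ?_ ?_ ?_ ?_ ?_
  · intro a ha
    simp only [Finset.mem_range] at ha
    simp only [Finset.mem_product, Finset.mem_range]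
    exact ⟨(Nat.div_lt_iff_lt_mul hn).mpr (by rwa [mul_comm] at ha), Nat.mod_lt a hn⟩
  · intro p hp
    simp only [Finset.mem_product, Finset.mem_range] at hp
    simp only [Finset.mem_range]
    calc p.2 + n * p.1 < n + n * p.1 := by omega
      _ ≤ n * c := by nlinarith [hp.1, hp.2]
  · intro a ha
    simp [Nat.mod_add_div a n]
  · intro p hp
    simp only [Finset.mem_product, Finset.mem_range] at hp
    have h1 : (p.2 + n * p.1) / n = p.1 := by
      rw [Nat.add_mul_div_left _ _ hn, Nat.div_eq_of_lt hp.2, zero_add]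
    have h2 : (p.2 + n * p.1) % n = p.2 := by
      rw [Nat.add_mul_mod_self_left, Nat.mod_eq_of_lt hp.2]
    simp [h1, h2]
  · intro a ha
    simp only []
    rw [Nat.mod_add_div a n]

lemma zeta_ne_zero (n : ℕ) : zeta n ≠ 0 := Complex.exp_ne_zero _

lemma zeta_pow_self (n : ℕ) (hn : 0 < n) : zeta n ^ (n : ℕ) = 1 := by
  have hn' : (n:ℂ) ≠ 0 := by exact_mod_cast hn.ne'
  rw [zeta, ← Complex.exp_nat_mul]
  rw [show (n:ℂ) * (2 * (Real.pi:ℂ) * Complex.I / n) = 2 * Real.pi * Complex.I by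
    field_simp]
  exact Complex.exp_two_pi_mul_I

lemma zeta_mul_pow (n c : ℕ) (hn : 0 < n) (hc : 0 < c) : zeta (n*c) ^ (c : ℕ) = zeta n := by
  have hn' : (n:ℂ) ≠ 0 := by exact_mod_cast hn.ne'
  have hc' : (c:ℂ) ≠ 0 := by exact_mod_cast hc.ne'
  rw [zeta, zeta, ← Complex.exp_nat_mul]
  congr 1
  push_cast
  field_simp

theorem betaB_mul_scaling' (m : ℕ) (n c : ℕ) (hn : 0 < n) (hc : 0 < c) (b : ℤ) :
    (∑ a ∈ Finset.range (n*c), zeta (n*c) ^ ((a : ℤ) * (b * c)) *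
      (((Polynomial.bernoulli m).eval ((a : ℚ) / ((n*c : ℕ) : ℚ)) : ℚ) : ℂ))
    = (c : ℂ) ^ ((1 : ℤ) - (m : ℤ)) * ∑ a ∈ Finset.range n, zeta n ^ ((a : ℤ) * b) *
      (((Polynomial.bernoulli m).eval ((a : ℚ) / (n : ℚ)) : ℚ) : ℂ) := by
  have hnq : (n:ℚ) ≠ 0 := by exact_mod_cast hn.ne'
  have hcq : (c:ℚ) ≠ 0 := by exact_mod_cast hc.ne'
  have hz1 : ∀ a : ℕ, zeta (n*c) ^ ((a:ℤ) * (b * c)) = zeta n ^ ((a:ℤ) * b) := by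
    intro a
    rw [show (a:ℤ) * (b * c) = (c:ℤ) * ((a:ℤ) * b) by ring, zpow_mul, zpow_natCast,
      zeta_mul_pow n c hn hc]
  have hz2 : ∀ r s : ℕ, zeta n ^ (((r + n*s : ℕ):ℤ) * b) = zeta n ^ ((r:ℤ) * b) := by
    intro r s
    have : ((r + n*s : ℕ):ℤ) * b = (r:ℤ) * b + (n:ℤ) * ((s:ℤ) * b) := by push_cast; ring
    have h1 : zeta n ^ ((n:ℤ) * ((s:ℤ) * b)) = 1 := by
      rw [zpow_mul, zpow_natCast, zeta_pow_self n hn, one_zpow]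
    rw [this, zpow_add₀ (zeta_ne_zero n), h1, mul_one]
  have harg : ∀ r s : ℕ, ((r + n*s : ℕ):ℚ) / ((n*c : ℕ):ℚ) = (((r:ℚ)/n) + s)/c := by
    intro r s
    push_cast
    field_simp
  rw [sum_range_mul_eq (fun a => zeta (n*c) ^ ((a : ℤ) * (b * c)) *
      (((Polynomial.bernoulli m).eval ((a : ℚ) / ((n*c : ℕ) : ℚ)) : ℚ) : ℂ)) n c hn]
  have step : ∀ s ∈ Finset.range c, ∀ r ∈ Finset.range n,
      zeta (n*c) ^ (((r + n*s : ℕ):ℤ) * (b * c)) *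
        (((Polynomial.bernoulli m).eval (((r + n*s : ℕ):ℚ) / ((n*c : ℕ) : ℚ)) : ℚ) : ℂ)
      = zeta n ^ ((r:ℤ) * b) *
        (((Polynomial.bernoulli m).eval ((((r:ℚ)/n) + s)/c) : ℚ) : ℂ) := by
    intro s _ r _
    rw [hz1, hz2, harg]
  calc ∑ s ∈ Finset.range c, ∑ r ∈ Finset.range n, _ 
      = ∑ s ∈ Finset.range c, ∑ r ∈ Finset.range n, zeta n ^ ((r:ℤ) * b) *
        (((Polynomial.bernoulli m).eval ((((r:ℚ)/n) + s)/c) : ℚ) : ℂ) :=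
        Finset.sum_congr rfl fun s hs => Finset.sum_congr rfl fun r hr => step s hs r hr
    _ = ∑ r ∈ Finset.range n, zeta n ^ ((r:ℤ) * b) *
        (((∑ s ∈ Finset.range c, (Polynomial.bernoulli m).eval ((((r:ℚ)/n) + s)/c) : ℚ)) : ℂ) := by
        rw [Finset.sum_comm]
        refine Finset.sum_congr rfl fun r _ => ?_
        push_cast
        rw [Finset.mul_sum]
    _ = (c : ℂ) ^ ((1 : ℤ) - (m : ℤ)) * ∑ r ∈ Finset.range n, zeta n ^ ((r:ℤ) * b) *
        (((Polynomial.bernoulli m).eval ((r : ℚ) / (n : ℚ)) : ℚ) : ℂ) := by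
        rw [Finset.mul_sum]
        refine Finset.sum_congr rfl fun r _ => ?_
        rw [raabe m c hc ((r:ℚ)/n)]
        push_cast
        ring

/-- `β_m(nc, bc) = c^{1-m} · β_m(n, b)`. -/
theorem betaB_mul_scaling (m : ℕ) (n c : ℕ) (hn : 0 < n) (hc : 0 < c) (b : ℤ) :
    betaB [m] (n * c) (b * (c : ℤ)) = (c : ℂ) ^ ((1 : ℤ) - (m : ℤ)) * betaB [m] n b := by
  simp only [betaB, List.map_cons, List.map_nil, List.prod_cons, List.prod_nil, mul_one]
  exact_mod_cast betaB_mul_scaling' m n c hn hc b
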